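/- In the spatial double-polygon problem, for n ≥ 2 the potential satisfies 4·V(φ_R) ≥ V(0), where V(φ) = (S_n/4)·sec φ + (1/4)·Σ_{k=1}^{n} (1 - c_k² cos²φ)^{-1/2} with c_k = cos(π(2k-1)/(2n)), S_n = Σ_{k=1}^{n-1} csc(πk/n), and φ_R ∈ (0, π/2) any point. -/

import Mathlib

open Real Finset

noncomputable def Ssum (n : ℕ) : ℝ := ∑ k ∈ Finset.Icc 1 (n - 1), 1 / Real.sin (π * k / n)

noncomputable def Vspatial (n : ℕ) (φ : ℝ) : ℝ :=
  Ssum n / 4 * (1 / Real.cos φ) +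
    (1 / 4) * ∑ k ∈ Finset.Icc 1 n,
      (1 - Real.cos (π * (2 * k - 1) / (2 * n)) ^ 2 * Real.cos φ ^ 2) ^ (-(1 : ℝ) / 2)

/-- On an interval `[a,b] ⊆ (0,π)`, the cosecant at an interior point is at most the
sum of the cosecants at the endpoints. -/
lemma csc_mid_le {a b x : ℝ} (ha : 0 < a) (hax : a ≤ x) (hxb : x ≤ b) (hb : b < π) :
    1 / Real.sin x ≤ 1 / Real.sin a + 1 / Real.sin b := by
  have hxπ : x < π := lt_of_le_of_lt hxb hb
  have h0x : 0 < x := lt_of_lt_of_le ha hax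
  have hsa : 0 < Real.sin a := Real.sin_pos_of_pos_of_lt_pi ha (lt_of_le_of_lt hax hxπ)
  have hsb : 0 < Real.sin b := Real.sin_pos_of_pos_of_lt_pi (lt_of_lt_of_le h0x hxb) hb
  rcases le_total x (π / 2) with h | h
  · have hle : Real.sin a ≤ Real.sin x :=
      Real.sin_le_sin_of_le_of_le_pi_div_two (by linarith) h hax
    have h1 : 1 / Real.sin x ≤ 1 / Real.sin a := one_div_le_one_div_of_le hsa hle
    have h2 : 0 < 1 / Real.sin b := by positivity
    linarith
  · have hle : Real.sin b ≤ Real.sin x := by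
      rw [← Real.sin_pi_sub x, ← Real.sin_pi_sub b]
      exact Real.sin_le_sin_of_le_of_le_pi_div_two (by linarith) (by linarith) (by linarith)
    have h1 : 1 / Real.sin x ≤ 1 / Real.sin b := one_div_le_one_div_of_le hsb hle
    have h2 : 0 < 1 / Real.sin a := by positivity
    linarith

lemma sin_theta_pos {n k : ℕ} (hk1 : 1 ≤ k) (hk2 : k ≤ n) :
    0 < Real.sin (π * (2 * k - 1) / (2 * n)) := by
  have hn : 0 < (n : ℝ) := by exact_mod_cast lt_of_lt_of_le hk1 hk2
  have hk1' : (1 : ℝ) ≤ k := by exact_mod_cast hk1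
  have hk2' : (k : ℝ) ≤ n := by exact_mod_cast hk2
  apply Real.sin_pos_of_pos_of_lt_pi
  · apply div_pos
    · nlinarith [Real.pi_pos]
    · positivity
  · rw [div_lt_iff₀ (by positivity)]
    nlinarith [Real.pi_pos]

lemma sin_mem_pos {n k : ℕ} (hk1 : 1 ≤ k) (hk2 : k ≤ n - 1) (hn : 2 ≤ n) :
    0 < Real.sin (π * k / n) := by
  have hn0 : 0 < n := lt_of_lt_of_le (by norm_num) hn
  have hn' : (0 : ℝ) < n := by exact_mod_cast hn0
  have hk1' : (1 : ℝ) ≤ k := by exact_mod_cast hk1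
  have hk2' : (k : ℝ) ≤ (n : ℝ) - 1 := by
    have : (k : ℝ) ≤ ((n - 1 : ℕ) : ℝ) := by exact_mod_cast hk2
    rwa [Nat.cast_sub (by omega), Nat.cast_one] at this
  apply Real.sin_pos_of_pos_of_lt_pi
  · have : (0:ℝ) < k := by linarith
    positivity
  · rw [div_lt_iff₀ hn']
    nlinarith [Real.pi_pos]

lemma Ssum_nonneg (n : ℕ) : 0 ≤ Ssum n := by
  rcases lt_or_ge n 2 with h | h
  · interval_cases n <;> simp [Ssum]
  · apply Finset.sum_nonneg
    intro k hk
    rw [Finset.mem_Icc] at hk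
    have := sin_mem_pos hk.1 hk.2 h
    positivity

lemma Tsum_le (n : ℕ) (hn : 2 ≤ n) :
    ∑ k ∈ Finset.Icc 1 n, 1 / Real.sin (π * (2 * k - 1) / (2 * n)) ≤ 3 * Ssum n := by
  have hπ := Real.pi_pos
  rcases eq_or_lt_of_le hn with h2 | h3
  · -- the case n = 2
    subst h2
    have hS2 : Ssum 2 = 1 := by
      rw [Ssum]
      norm_num
    rw [hS2, show Finset.Icc 1 2 = {1, 2} from rfl, Finset.sum_insert (by decide),
      Finset.sum_singleton]
    have e1 : π * (2 * ((1:ℕ):ℝ) - 1) / (2 * ((2:ℕ):ℝ)) = π / 4 := by push_cast; ring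
    have e2 : π * (2 * ((2:ℕ):ℝ) - 1) / (2 * ((2:ℕ):ℝ)) = π - π / 4 := by push_cast; ring
    rw [e1, e2, Real.sin_pi_sub, Real.sin_pi_div_four]
    have h2 : (0:ℝ) < Real.sqrt 2 := by positivity
    rw [← add_div, div_le_iff₀ (by positivity)]
    nlinarith [Real.sq_sqrt (by norm_num : (0:ℝ) ≤ 2)]
  · -- the case 3 ≤ n
    have hn3 : 3 ≤ n := h3
    have hn0 : (0:ℝ) < (n:ℝ) := by exact_mod_cast (by omega : 0 < n)
    have hn1 : 1 ≤ n - 1 := by omega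
    have hN3 : (3:ℝ) ≤ (n:ℝ) := by exact_mod_cast hn3
    have hcast : ((n - 1 : ℕ) : ℝ) = (n:ℝ) - 1 := by
      rw [Nat.cast_sub (by omega), Nat.cast_one]
    -- positivity of the two special sines
    have hs2n : 0 < Real.sin (π / (2 * n)) := by
      apply Real.sin_pos_of_pos_of_lt_pi (by positivity)
      rw [div_lt_iff₀ (by positivity)]; nlinarith
    have hsn : 0 < Real.sin (π / n) := by
      apply Real.sin_pos_of_pos_of_lt_pi (by positivity)
      rw [div_lt_iff₀ hn0]; nlinarith
    -- half-angle bound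
    have hdouble : Real.sin (π / n) = 2 * Real.sin (π / (2*n)) * Real.cos (π / (2*n)) := by
      rw [show π / (n:ℝ) = 2 * (π / (2*n)) by ring, Real.sin_two_mul]
    have hhalf : 1 / Real.sin (π / (2*n)) ≤ 2 / Real.sin (π / n) := by
      rw [div_le_div_iff₀ hs2n hsn]
      nlinarith [Real.cos_le_one (π / (2*(n:ℝ)))]
    -- each summand of Ssum is nonneg
    have hnn : ∀ k ∈ Finset.Icc 1 (n-1), 0 ≤ 1 / Real.sin (π * k / n) := by
      intro k hk
      rw [Finset.mem_Icc] at hk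
      have := sin_mem_pos hk.1 hk.2 hn
      positivity
    -- the value of the last term of Ssum
    have hlast : 1 / Real.sin (π * ((n-1:ℕ):ℝ) / n) = 1 / Real.sin (π / n) := by
      rw [hcast, show π * ((n:ℝ) - 1) / n = π - π / n by field_simp, Real.sin_pi_sub]
    -- 2 csc(π/n) ≤ Ssum n
    have h2S : 2 / Real.sin (π / n) ≤ Ssum n := by
      have hsub : ({1, n-1} : Finset ℕ) ⊆ Finset.Icc 1 (n-1) := by
        intro x hx
        simp only [Finset.mem_insert, Finset.mem_singleton] at hx
        rw [Finset.mem_Icc]; omega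
      have hpair : ∑ k ∈ ({1, n-1} : Finset ℕ), 1 / Real.sin (π * k / n)
          = 1 / Real.sin (π * ((1:ℕ):ℝ) / n) + 1 / Real.sin (π * ((n-1:ℕ):ℝ) / n) :=
        Finset.sum_pair (by omega)
      have hle := Finset.sum_le_sum_of_subset_of_nonneg hsub
        (fun k hk _ => hnn k hk)
      rw [Ssum] at *
      rw [hpair, hlast, Nat.cast_one, show π * (1:ℝ) / n = π / n by ring] at hle
      calc 2 / Real.sin (π / n) = 1 / Real.sin (π / n) + 1 / Real.sin (π / n) := by ring
        _ ≤ _ := hle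
    -- split T
    have hsplitTop : ∑ k ∈ Finset.Icc 1 n, 1 / Real.sin (π * (2 * k - 1) / (2 * n))
        = ∑ k ∈ Finset.Icc 1 (n-1), 1 / Real.sin (π * (2 * k - 1) / (2 * n))
          + 1 / Real.sin (π * (2 * (n:ℝ) - 1) / (2 * n)) := by
      rw [show Finset.Icc 1 n = Finset.Icc 1 ((n-1)+1) by rw [Nat.sub_add_cancel (by omega)],
        Finset.sum_Icc_succ_top (by omega), Nat.sub_add_cancel (by omega)]
    have hsplitBot : ∑ k ∈ Finset.Icc 1 (n-1), 1 / Real.sin (π * (2 * k - 1) / (2 * n))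
        = 1 / Real.sin (π * (2 * ((1:ℕ):ℝ) - 1) / (2 * n))
          + ∑ k ∈ Finset.Ioc 1 (n-1), 1 / Real.sin (π * (2 * k - 1) / (2 * n)) := by
      rw [Finset.Icc_eq_cons_Ioc hn1, Finset.sum_cons]
    -- endpoint values
    have hg1 : 1 / Real.sin (π * (2 * ((1:ℕ):ℝ) - 1) / (2 * n)) = 1 / Real.sin (π / (2*n)) := by
      norm_num
    have hgn : 1 / Real.sin (π * (2 * (n:ℝ) - 1) / (2 * n)) = 1 / Real.sin (π / (2*n)) := by
      rw [show π * (2 * (n:ℝ) - 1) / (2 * n) = π - π / (2*n) by field_simp,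
        Real.sin_pi_sub]
    -- bound the middle sum termwise
    have hmid : ∑ k ∈ Finset.Ioc 1 (n-1), 1 / Real.sin (π * (2 * k - 1) / (2 * n))
        ≤ ∑ k ∈ Finset.Ioc 1 (n-1),
            (1 / Real.sin (π * ((k:ℝ) - 1) / n) + 1 / Real.sin (π * k / n)) := by
      apply Finset.sum_le_sum
      intro k hk
      rw [Finset.mem_Ioc] at hk
      have hk2 : (2:ℝ) ≤ k := by exact_mod_cast hk.1
      have hkn : (k:ℝ) ≤ (n:ℝ) - 1 := by
        have : ((k:ℕ):ℝ) ≤ ((n-1:ℕ):ℝ) := by exact_mod_cast hk.2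
        rwa [hcast] at this
      apply csc_mid_le
      · have h1 : (0:ℝ) < (k:ℝ) - 1 := by linarith
        positivity
      · rw [div_le_div_iff₀ (by positivity) (by positivity)]
        nlinarith
      · rw [div_le_div_iff₀ (by positivity) (by positivity)]
        nlinarith
      · rw [div_lt_iff₀ hn0]
        nlinarith
    -- rewrite the bound as two sums
    rw [Finset.sum_add_distrib] at hmid
    -- second sum : tail of Ssum
    have hB : ∑ k ∈ Finset.Ioc 1 (n-1), 1 / Real.sin (π * (k:ℝ) / n)
        = Ssum n - 1 / Real.sin (π / n) := by
      have h : Ssum n = 1 / Real.sin (π * ((1:ℕ):ℝ) / n)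
          + ∑ k ∈ Finset.Ioc 1 (n-1), 1 / Real.sin (π * (k:ℝ) / n) := by
        rw [Ssum, Finset.Icc_eq_cons_Ioc hn1, Finset.sum_cons]
      rw [h, Nat.cast_one, show π * (1:ℝ) / n = π / n by ring]
      ring
    -- first sum : initial part of Ssum, by reindexing
    have hmap : Finset.Ioc 1 (n-1) = (Finset.Icc 1 (n-2)).map (addRightEmbedding 1) := by
      rw [Finset.map_add_right_Icc, ← Finset.Icc_add_one_left_eq_Ioc]
      congr 1 <;> omega
    have hA : ∑ k ∈ Finset.Ioc 1 (n-1), 1 / Real.sin (π * ((k:ℝ) - 1) / n)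
        = ∑ j ∈ Finset.Icc 1 (n-2), 1 / Real.sin (π * (j:ℝ) / n) := by
      rw [hmap, Finset.sum_map]
      apply Finset.sum_congr rfl
      intro j hj
      simp only [addRightEmbedding_apply]
      push_cast
      ring_nf
    have hA2 : ∑ j ∈ Finset.Icc 1 (n-2), 1 / Real.sin (π * (j:ℝ) / n)
        = Ssum n - 1 / Real.sin (π / n) := by
      have h : Ssum n = ∑ j ∈ Finset.Icc 1 (n-2), 1 / Real.sin (π * (j:ℝ) / n)
          + 1 / Real.sin (π * ((n-1:ℕ):ℝ) / n) := by
        rw [Ssum, show n - 1 = (n-2)+1 by omega, Finset.sum_Icc_succ_top (by omega),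
          show (n-2)+1 = n-1 by omega]
      rw [hlast] at h
      linarith
    -- put everything together
    rw [hA, hA2, hB] at hmid
    rw [hsplitTop, hsplitBot, hg1, hgn]
    have htwo : 2 / Real.sin (π / n) = 2 * (1 / Real.sin (π / n)) := by ring
    linarith

theorem four_V_phiR_ge_V_zero (n : ℕ) (hn : 2 ≤ n) (φR : ℝ)
    (hφR : φR ∈ Set.Ioo 0 (π / 2)) :
    4 * Vspatial n φR ≥ Vspatial n 0 := by
  obtain ⟨hφ0, hφπ⟩ := hφR
  have hπ := Real.pi_pos
  have hS := Ssum_nonneg n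
  -- Step 1 : Vspatial n 0 = Ssum n / 4 + (1/4) * T
  have hV0 : Vspatial n 0 = Ssum n / 4 +
      (1 / 4) * ∑ k ∈ Finset.Icc 1 n, 1 / Real.sin (π * (2 * k - 1) / (2 * n)) := by
    unfold Vspatial
    rw [Real.cos_zero]
    norm_num
    apply Finset.sum_congr rfl
    intro k hk
    rw [Finset.mem_Icc] at hk
    have hs := sin_theta_pos hk.1 hk.2
    set θ := π * (2 * (k:ℝ) - 1) / (2 * n) with hθ
    have h1 : 1 - Real.cos θ ^ 2 = Real.sin θ ^ 2 := by
      have := Real.sin_sq_add_cos_sq θ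
      linarith
    rw [h1, ← Real.rpow_natCast (Real.sin θ) 2, ← Real.rpow_mul hs.le,
      show ((2:ℕ):ℝ) * -(1/2 : ℝ) = -1 by norm_num, Real.rpow_neg_one]
  -- Step 2 : Ssum n ≤ 4 * Vspatial n φR
  have hcos : 0 < Real.cos φR := Real.cos_pos_of_mem_Ioo ⟨by linarith, hφπ⟩
  have hsec : 1 ≤ 1 / Real.cos φR := by
    rw [le_div_iff₀ hcos, one_mul]
    exact Real.cos_le_one φR
  have hsum_nonneg : 0 ≤ ∑ k ∈ Finset.Icc 1 n,
      (1 - Real.cos (π * (2 * k - 1) / (2 * n)) ^ 2 * Real.cos φR ^ 2) ^ (-(1 : ℝ) / 2) := by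
    apply Finset.sum_nonneg
    intro k hk
    apply Real.rpow_nonneg
    nlinarith [Real.cos_sq_le_one (π * (2 * (k:ℝ) - 1) / (2 * n)), Real.cos_sq_le_one φR, sq_nonneg (Real.cos (π * (2 * (k:ℝ) - 1) / (2 * n))), sq_nonneg (Real.cos φR)]
  have h2 : Ssum n ≤ 4 * Vspatial n φR := by
    unfold Vspatial
    have : Ssum n * 1 ≤ Ssum n * (1 / Real.cos φR) := by
      apply mul_le_mul_of_nonneg_left hsec hS
    nlinarith
  have hT := Tsum_le n hn
  rw [ge_iff_le, hV0]
  linarith
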